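/- Define E_k by E_1 = 0 and E_k = (0.5^k·(∑_{l=2}^{k-1} C(k,l)·E_l) + 1)/(1 - 0.5^{k-1}) for k ≥ 2. Then E_k ≤ log₂(k) + 1 for all k ≥ 2. -/

import Mathlib

open Real Finset

lemma sum_choose_Ico' (k : ℕ) (hk : 2 ≤ k) :
    (∑ l ∈ Finset.Ico 2 k, k.choose l) + (k + 2) = 2 ^ k := by
  have h0 : ∑ m ∈ Finset.range (k + 1), k.choose m = 2 ^ k := Nat.sum_range_choose k
  rw [Finset.range_eq_Ico] at h0
  rw [← Finset.sum_Ico_consecutive (fun l => k.choose l) (by omega : 0 ≤ 2) (by omega : 2 ≤ k + 1)] at h0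
  rw [← Finset.sum_Ico_consecutive (fun l => k.choose l) (by omega : 2 ≤ k) (by omega : k ≤ k + 1)] at h0
  have h1 : ∑ l ∈ Finset.Ico 0 2, k.choose l = 1 + k := by
    simp [Finset.sum_Ico_eq_sum_range, Finset.sum_range_succ]
  have h2 : ∑ l ∈ Finset.Ico k (k + 1), k.choose l = 1 := by simp
  omega

lemma sum_mul_choose_range (n : ℕ) (hn : 1 ≤ n) :
    ∑ i ∈ Finset.range (n + 1), i * n.choose i = n * 2 ^ (n - 1) := by
  obtain ⟨m, rfl⟩ : ∃ m, n = m + 1 := ⟨n - 1, by omega⟩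
  rw [Finset.sum_range_succ']
  simp only [Nat.zero_mul, add_zero]
  have hterm : ∀ i, (i + 1) * (m + 1).choose (i + 1) = (m + 1) * m.choose i := by
    intro i
    have h := Nat.add_one_mul_choose_eq m i
    simpa [mul_comm] using h.symm
  calc ∑ i ∈ Finset.range (m + 1), (i + 1) * (m + 1).choose (i + 1)
      = ∑ i ∈ Finset.range (m + 1), (m + 1) * m.choose i := by
        exact Finset.sum_congr rfl fun i _ => hterm i
    _ = (m + 1) * ∑ i ∈ Finset.range (m + 1), m.choose i := by rw [Finset.mul_sum]
    _ = (m + 1) * 2 ^ m := by rw [Nat.sum_range_choose]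
    _ = (m + 1) * 2 ^ (m + 1 - 1) := by simp

lemma sum_mul_choose_Ico (k : ℕ) (hk : 2 ≤ k) :
    (∑ l ∈ Finset.Ico 2 k, l * k.choose l) + 2 * k = k * 2 ^ (k - 1) := by
  have h0 := sum_mul_choose_range k (by omega)
  rw [Finset.range_eq_Ico] at h0
  rw [← Finset.sum_Ico_consecutive (fun l => l * k.choose l) (by omega : 0 ≤ 2) (by omega : 2 ≤ k + 1)] at h0
  rw [← Finset.sum_Ico_consecutive (fun l => l * k.choose l) (by omega : 2 ≤ k) (by omega : k ≤ k + 1)] at h0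
  have h1 : ∑ l ∈ Finset.Ico 0 2, l * k.choose l = k := by
    simp [Finset.sum_Ico_eq_sum_range, Finset.sum_range_succ]
  have h2 : ∑ l ∈ Finset.Ico k (k + 1), l * k.choose l = k := by simp
  omega

/-- If `E 1 = 0` and `E k = (0.5^k (∑_{l=2}^{k-1} C(k,l) E l) + 1)/(1 - 0.5^{k-1})`
for `k ≥ 2`, then `E k ≤ log₂ k + 1` for all `k ≥ 2`. -/
theorem stmt_8 (E : ℕ → ℝ) (h1 : E 1 = 0)
    (hrec : ∀ k, 2 ≤ k →
      E k = ((0.5 : ℝ) ^ k * (∑ l ∈ Finset.Ico 2 k, (k.choose l : ℝ) * E l) + 1)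
              / (1 - (0.5 : ℝ) ^ (k - 1))) :
    ∀ k, 2 ≤ k → E k ≤ Real.logb 2 k + 1 := by
  intro k
  induction k using Nat.strong_induction_on with
  | _ k IH =>
  intro hk
  rcases eq_or_lt_of_le hk with hk2 | hk3
  · -- k = 2
    subst hk2
    rw [hrec 2 le_rfl]
    norm_num [Real.logb_self_eq_one]
  · -- k ≥ 3
    have hk3 : 3 ≤ k := hk3
    have hkR3 : (3 : ℝ) ≤ (k : ℝ) := by exact_mod_cast hk3
    have hkpos : (0 : ℝ) < (k : ℝ) := by linarith
    set x : ℝ := (0.5 : ℝ) ^ k with hxdef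
    have hxpos : 0 < x := by positivity
    have h2x : (0.5 : ℝ) ^ (k - 1) = 2 * x := by
      have hxeq : x = (0.5 : ℝ) ^ (k - 1) * 0.5 := by
        rw [hxdef, ← pow_succ]
        congr 1
        omega
      linarith
    have hd : 0 < 1 - (0.5 : ℝ) ^ (k - 1) := by
      have : (0.5 : ℝ) ^ (k - 1) < 1 :=
        pow_lt_one₀ (by norm_num) (by norm_num) (by omega)
      linarith
    set L : ℝ := Real.logb 2 k with hLdef
    have hlog2 : (0 : ℝ) < Real.log 2 := Real.log_pos one_lt_two
    have hlog2lt : Real.log 2 < 0.6931471808 := Real.log_two_lt_d9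
    have hlogk : 1 ≤ Real.log k := by
      have hexp3 : Real.exp 1 ≤ 3 := by
        have := Real.exp_one_lt_d9
        linarith
      calc (1 : ℝ) = Real.log (Real.exp 1) := (Real.log_exp 1).symm
        _ ≤ Real.log k := by
            apply Real.log_le_log (Real.exp_pos 1)
            linarith
    -- sums over choose, cast to ℝ
    have hsumC : (∑ l ∈ Finset.Ico 2 k, (k.choose l : ℝ)) = 2 ^ k - ((k : ℝ) + 2) := by
      have h := sum_choose_Ico' k hk
      have h' : ((∑ l ∈ Finset.Ico 2 k, k.choose l : ℕ) : ℝ) + ((k : ℝ) + 2) = 2 ^ k := by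
        exact_mod_cast h
      push_cast at h' ⊢
      linarith
    have hsumLC : (∑ l ∈ Finset.Ico 2 k, (l : ℝ) * (k.choose l : ℝ))
        = (k : ℝ) * 2 ^ (k - 1) - 2 * k := by
      have h := sum_mul_choose_Ico k hk
      have h' : ((∑ l ∈ Finset.Ico 2 k, l * k.choose l : ℕ) : ℝ) + 2 * (k : ℝ)
          = (k : ℝ) * 2 ^ (k - 1) := by exact_mod_cast h
      push_cast at h' ⊢
      linarith
    have h2pow : (2 : ℝ) * 2 ^ (k - 1) = 2 ^ k := by
      rw [← pow_succ']
      congr 1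
      omega
    -- per-term tangent-line bound
    have hterm : ∀ l ∈ Finset.Ico 2 k, (k.choose l : ℝ) * E l
        ≤ (k.choose l : ℝ) * (L + (2 * (l : ℝ) - k) / ((k : ℝ) * Real.log 2)) := by
      intro l hl
      rw [Finset.mem_Ico] at hl
      have hlpos : (0 : ℝ) < (l : ℝ) := by
        have : 0 < l := by omega
        exact_mod_cast this
      have hEl : E l ≤ Real.logb 2 l + 1 := IH l hl.2 hl.1
      have ht : Real.log (2 * (l : ℝ) / k) ≤ 2 * (l : ℝ) / k - 1 :=
        Real.log_le_sub_one_of_pos (by positivity)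
      have hsplit : Real.log (2 * (l : ℝ) / k)
          = Real.log 2 + Real.log l - Real.log k := by
        rw [Real.log_div (by positivity) (by positivity), Real.log_mul (by norm_num) hlpos.ne']
      have hfrac : 2 * (l : ℝ) / k - 1 = (2 * (l : ℝ) - k) / k := by
        field_simp
      have hcore : Real.log l + Real.log 2 ≤ Real.log k + (2 * (l : ℝ) - k) / k := by
        rw [hsplit, hfrac] at ht
        linarith
      have hbound : Real.logb 2 l + 1 ≤ L + (2 * (l : ℝ) - k) / ((k : ℝ) * Real.log 2) := by
        have e1 : Real.logb 2 l + 1 = (Real.log l + Real.log 2) / Real.log 2 := by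
          rw [Real.logb]
          field_simp
        have e2 : L + (2 * (l : ℝ) - k) / ((k : ℝ) * Real.log 2)
            = (Real.log k + (2 * (l : ℝ) - k) / k) / Real.log 2 := by
          rw [hLdef, Real.logb]
          field_simp
        rw [e1, e2]
        exact (div_le_div_iff_of_pos_right hlog2).mpr hcore
      exact mul_le_mul_of_nonneg_left (hEl.trans hbound) (by positivity)
    have hS : (∑ l ∈ Finset.Ico 2 k, (k.choose l : ℝ) * E l)
        ≤ (2 ^ k - ((k : ℝ) + 2)) * L + ((k : ℝ) - 2) / Real.log 2 := by
      calc (∑ l ∈ Finset.Ico 2 k, (k.choose l : ℝ) * E l)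
          ≤ ∑ l ∈ Finset.Ico 2 k,
              (k.choose l : ℝ) * (L + (2 * (l : ℝ) - k) / ((k : ℝ) * Real.log 2)) :=
            Finset.sum_le_sum hterm
        _ = (∑ l ∈ Finset.Ico 2 k, (k.choose l : ℝ)) * L
            + (2 * (∑ l ∈ Finset.Ico 2 k, (l : ℝ) * (k.choose l : ℝ))
               - (k : ℝ) * (∑ l ∈ Finset.Ico 2 k, (k.choose l : ℝ)))
              * (1 / ((k : ℝ) * Real.log 2)) := by
            rw [Finset.sum_mul, Finset.mul_sum, Finset.mul_sum, ← Finset.sum_sub_distrib,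
              Finset.sum_mul, ← Finset.sum_add_distrib]
            apply Finset.sum_congr rfl
            intro l _
            field_simp
        _ = (2 ^ k - ((k : ℝ) + 2)) * L + ((k : ℝ) - 2) / Real.log 2 := by
            have h2powk : (k : ℝ) * (2 * 2 ^ (k - 1)) = (k : ℝ) * 2 ^ k := by rw [h2pow]
            have hnum : 2 * ((k : ℝ) * 2 ^ (k - 1) - 2 * (k : ℝ))
                - (k : ℝ) * (2 ^ k - ((k : ℝ) + 2)) = (k : ℝ) * ((k : ℝ) - 2) := by
              linear_combination h2powk
            have hfin : (k : ℝ) * ((k : ℝ) - 2) * (1 / ((k : ℝ) * Real.log 2))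
                = ((k : ℝ) - 2) / Real.log 2 := by
              field_simp
            rw [hsumC, hsumLC, hnum, hfin]
    -- main numeric inequality
    have hmain : ((k : ℝ) - 2) / Real.log 2 + 2 ≤ (k : ℝ) * L := by
      have h1' : (k : ℝ) - 2 + 2 * Real.log 2 ≤ (k : ℝ) * Real.log k := by
        nlinarith [mul_le_mul_of_nonneg_left hlogk hkpos.le, hlog2lt]
      have e : ((k : ℝ) - 2) / Real.log 2 + 2 = ((k : ℝ) - 2 + 2 * Real.log 2) / Real.log 2 := by
        field_simp
      have e2 : (k : ℝ) * L = ((k : ℝ) * Real.log k) / Real.log 2 := by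
        rw [hLdef, Real.logb]
        ring
      rw [e, e2]
      exact (div_le_div_iff_of_pos_right hlog2).mpr h1'
    have hx2k : x * 2 ^ k = 1 := by
      rw [hxdef, ← mul_pow]
      norm_num
    rw [hrec k hk, div_le_iff₀ hd, h2x]
    show x * (∑ l ∈ Finset.Ico 2 k, (k.choose l : ℝ) * E l) + 1 ≤ (L + 1) * (1 - 2 * x)
    have hxS : x * (∑ l ∈ Finset.Ico 2 k, (k.choose l : ℝ) * E l)
        ≤ x * ((2 ^ k - ((k : ℝ) + 2)) * L + ((k : ℝ) - 2) / Real.log 2) :=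
      mul_le_mul_of_nonneg_left hS hxpos.le
    have hx2kL : x * 2 ^ k * L = L := by rw [hx2k, one_mul]
    have hmul : x * (((k : ℝ) - 2) / Real.log 2 + 2) ≤ x * ((k : ℝ) * L) :=
      mul_le_mul_of_nonneg_left hmain hxpos.le
    nlinarith [hxS, hx2kL, hmul]
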